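/- arXiv:2506.20874 — 7 statements merged into one kernel-verified Lean document; each statement's English description precedes it below -/
import Mathlib

section
/- If F = (X,R) and G = (Y,S) are preorders and the product frame F × G is prenoetherian (its skeleton is Noetherian), then for every subset P ⊆ X×Y, every subset Q ⊆ X×Y, and every point a ∈ Q, there exists c ∈ (R₁∘R₂)(a) ∩ Q such that every u ∈ (R₁∘R₂)(c) with u ∈ P satisfies: for all v with u R₁ v and v ∈ Q, we have v R₁ u (this is the frame condition of the presymmetry axiom presym₁). -/
/-- The horizontal relation of a product frame. -/
def prodR1 {X Y : Type*} (R : X → X → Prop) : X × Y → X × Y → Prop :=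
  fun p q => R p.1 q.1 ∧ p.2 = q.2

/-- The vertical relation of a product frame. -/
def prodR2 {X Y : Type*} (S : Y → Y → Prop) : X × Y → X × Y → Prop :=
  fun p q => p.1 = q.1 ∧ S p.2 q.2

/-- If `F = (X,R)` and `G = (Y,S)` are preorders and the product frame `F × G` is
prenoetherian (its skeleton has no infinite strictly ascending chain), then the frame
condition of the presymmetry axiom `presym₁` holds: for all `P, Q ⊆ X × Y` and `a ∈ Q`,
there is `c ∈ (R₁∘R₂)(a) ∩ Q` such that every `u ∈ (R₁∘R₂)(c)` with `u ∈ P` satisfies: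
all `v` with `u R₁ v` and `v ∈ Q` have `v R₁ u`. -/
theorem prenoetherian_presym₁ {X Y : Type*} (R : X → X → Prop) (S : Y → Y → Prop)
    (hRrefl : Reflexive R) (hRtrans : Transitive R)
    (hSrefl : Reflexive S) (hStrans : Transitive S)
    (hnoeth : ¬ ∃ f : ℕ → X × Y, ∀ n : ℕ,
      Relation.ReflTransGen (fun p q => prodR1 R p q ∨ prodR2 S p q) (f n) (f (n + 1)) ∧
      ¬ Relation.ReflTransGen (fun p q => prodR1 R p q ∨ prodR2 S p q) (f (n + 1)) (f n))
    (P Q : Set (X × Y)) (a : X × Y) (ha : a ∈ Q) :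
    ∃ c : X × Y, c ∈ Q ∧ Relation.Comp (prodR1 R) (prodR2 S) a c ∧
      ∀ u : X × Y, Relation.Comp (prodR1 R) (prodR2 S) c u → u ∈ P →
        ∀ v : X × Y, prodR1 R u v → v ∈ Q → prodR1 R v u := by
  have hle : ∀ p q : X × Y,
      Relation.ReflTransGen (fun p q => prodR1 R p q ∨ prodR2 S p q) p q ↔
        (R p.1 q.1 ∧ S p.2 q.2) := by
    intro p q
    constructor
    · intro h
      induction h with
      | refl => exact ⟨hRrefl _, hSrefl _⟩
      | tail h1 h2 ih =>
        rcases h2 with ⟨hr, he⟩ | ⟨he, hs⟩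
        · exact ⟨hRtrans ih.1 hr, he ▸ ih.2⟩
        · exact ⟨he ▸ ih.1, hStrans ih.2 hs⟩
    · rintro ⟨h1, h2⟩
      exact Relation.ReflTransGen.head (b := (q.1, p.2)) (Or.inl ⟨h1, rfl⟩)
        (Relation.ReflTransGen.single (Or.inr ⟨rfl, h2⟩))
  have key : ∃ c, c ∈ Q ∧ (R a.1 c.1 ∧ S a.2 c.2) ∧
      ∀ d ∈ Q, (R c.1 d.1 ∧ S c.2 d.2) → (R d.1 c.1 ∧ S d.2 c.2) := by
    by_contra hk
    push_neg at hk
    have step : ∀ c : {c : X × Y // c ∈ Q ∧ R a.1 c.1 ∧ S a.2 c.2},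
        ∃ d : {c : X × Y // c ∈ Q ∧ R a.1 c.1 ∧ S a.2 c.2},
          (R c.1.1 d.1.1 ∧ S c.1.2 d.1.2) ∧ ¬(R d.1.1 c.1.1 ∧ S d.1.2 c.1.2) := by
      rintro ⟨c, hcQ, hc⟩
      obtain ⟨d, hdQ, hcd, hnd⟩ := hk c hcQ hc
      exact ⟨⟨d, hdQ, hRtrans hc.1 hcd.1, hStrans hc.2 hcd.2⟩, hcd, fun h => hnd h.1 h.2⟩
    choose g hg using step
    refine hnoeth ⟨fun n => (g^[n] ⟨a, ha, hRrefl _, hSrefl _⟩).1, fun n => ?_⟩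
    have hfs : g^[n+1] ⟨a, ha, hRrefl _, hSrefl _⟩ = g (g^[n] ⟨a, ha, hRrefl _, hSrefl _⟩) :=
      Function.iterate_succ_apply' g n _
    have h1 := (hg (g^[n] ⟨a, ha, hRrefl _, hSrefl _⟩)).1
    have h2 := (hg (g^[n] ⟨a, ha, hRrefl _, hSrefl _⟩)).2
    rw [← hfs] at h1 h2
    exact ⟨(hle _ _).2 h1, fun hc => h2 ((hle _ _).1 hc)⟩
  obtain ⟨c, hcQ, hac, hmax⟩ := key
  refine ⟨c, hcQ, ⟨(c.1, a.2), ⟨hac.1, rfl⟩, rfl, hac.2⟩, ?_⟩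
  rintro u ⟨w, ⟨hcw1, hcw2⟩, hw1, hw2⟩ _ v ⟨huv, he⟩ hvQ
  have hcu1 : R c.1 u.1 := hw1 ▸ hcw1
  have hcu2 : S c.2 u.2 := hcw2 ▸ hw2
  have hvc := hmax v hvQ ⟨hRtrans hcu1 huv, he ▸ hcu2⟩
  exact ⟨hRtrans hvc.1 hcu1, he.symm⟩
end

section
/- Let F = (X,R₁,R₂) be a frame where R₁, R₂ are preorders. If R₁ and R₂ commute on X and C ⊆ X is a cluster of (X, R₁∪R₂), then the restrictions of R₁ and R₂ to C also commute. -/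
/-- If the relations `R₁` and `R₂` of a bimodal frame (both preorders) commute on `X`,
and `C` is a cluster of `(X, R₁ ∪ R₂)` (an equivalence class of `S* ∩ (S*)⁻¹` for
`S = R₁ ∪ R₂`), then the restrictions of `R₁` and `R₂` to `C` also commute. -/
theorem cluster_restrictions_commute {X : Type*} (R1 R2 : X → X → Prop)
    (h1refl : Reflexive R1) (h1trans : Transitive R1)
    (h2refl : Reflexive R2) (h2trans : Transitive R2)
    (hcomm : Relation.Comp R1 R2 = Relation.Comp R2 R1)
    (C : Set X)
    (hC : ∃ x : X, C = {y | Relation.ReflTransGen (fun a b => R1 a b ∨ R2 a b) x y ∧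
                           Relation.ReflTransGen (fun a b => R1 a b ∨ R2 a b) y x}) :
    ∀ a ∈ C, ∀ c ∈ C,
      ((∃ d ∈ C, R1 a d ∧ R2 d c) ↔ (∃ d ∈ C, R2 a d ∧ R1 d c)) := by
  obtain ⟨x, rfl⟩ := hC
  intro a ha c hc
  have key : ∀ a c : X,
      (Relation.ReflTransGen (fun a b => R1 a b ∨ R2 a b) x a ∧
       Relation.ReflTransGen (fun a b => R1 a b ∨ R2 a b) a x) →
      (Relation.ReflTransGen (fun a b => R1 a b ∨ R2 a b) x c ∧
       Relation.ReflTransGen (fun a b => R1 a b ∨ R2 a b) c x) →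
      (∃ e, R2 a e ∧ R1 e c) →
      ∃ d ∈ {y | Relation.ReflTransGen (fun a b => R1 a b ∨ R2 a b) x y ∧
          Relation.ReflTransGen (fun a b => R1 a b ∨ R2 a b) y x}, R2 a d ∧ R1 d c := by
    intro a c ha hc ⟨e, hae, hec⟩
    refine ⟨e, ⟨ha.1.trans (Relation.ReflTransGen.single (Or.inr hae)),
      (Relation.ReflTransGen.single (r := fun a b => R1 a b ∨ R2 a b) (Or.inl hec)).trans hc.2⟩, hae, hec⟩
  constructor
  · rintro ⟨d, _, had, hdc⟩
    have : Relation.Comp R2 R1 a c := by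
      rw [← hcomm]; exact ⟨d, had, hdc⟩
    exact key a c ha hc this
  · rintro ⟨d, _, had, hdc⟩
    have : Relation.Comp R1 R2 a c := by
      rw [hcomm]; exact ⟨d, had, hdc⟩
    obtain ⟨e, hae, hec⟩ := this
    exact ⟨e, ⟨ha.1.trans (Relation.ReflTransGen.single (Or.inl hae)),
      (Relation.ReflTransGen.single (r := fun a b => R1 a b ∨ R2 a b) (Or.inr hec)).trans hc.2⟩, hae, hec⟩
end

section
/- Let F₁, F₂, G₁, G₂ be pairwise disjoint bimodal tense frames whose relations are preorders, with surjective p-morphisms f : F₁ ↠ G₁ and g : F₂ ↠ G₂. Then f ∪ g is a surjective p-morphism from the tense sum F₁ ⊕↔ F₂ to G₁ ⊕↔ G₂. -/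
/-- First relation of the tense sum: all pairs from the left summand to the right are added. -/
def tenseSumRel1 {X Y : Type*} (R : X → X → Prop) (S : Y → Y → Prop) :
    X ⊕ Y → X ⊕ Y → Prop
  | Sum.inl a, Sum.inl b => R a b
  | Sum.inr a, Sum.inr b => S a b
  | Sum.inl _, Sum.inr _ => True
  | Sum.inr _, Sum.inl _ => False

/-- Second relation of the tense sum: all pairs from the right summand to the left are added. -/
def tenseSumRel2 {X Y : Type*} (R : X → X → Prop) (S : Y → Y → Prop) :
    X ⊕ Y → X ⊕ Y → Prop
  | Sum.inl a, Sum.inl b => R a b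
  | Sum.inr a, Sum.inr b => S a b
  | Sum.inl _, Sum.inr _ => False
  | Sum.inr _, Sum.inl _ => True

/-- If `F₁, F₂, G₁, G₂` are tense frames whose relations are preorders, and
`f : F₁ ↠ G₁`, `g : F₂ ↠ G₂` are surjective p-morphisms, then `f ∪ g` (realized as
`Sum.map f g`) is a surjective p-morphism of the tense sums `F₁ ⊕↔ F₂ ↠ G₁ ⊕↔ G₂`. -/
theorem tense_sum_pmorphism {X1 X2 Y1 Y2 : Type*}
    (R1 R2 : X1 → X1 → Prop) (S1 S2 : X2 → X2 → Prop)
    (T1 T2 : Y1 → Y1 → Prop) (U1 U2 : Y2 → Y2 → Prop)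
    (hR1refl : Reflexive R1) (hR1trans : Transitive R1)
    (hS1refl : Reflexive S1) (hS1trans : Transitive S1)
    (hT1refl : Reflexive T1) (hT1trans : Transitive T1)
    (hU1refl : Reflexive U1) (hU1trans : Transitive U1)
    (htenseF1 : ∀ a b, R2 a b ↔ R1 b a) (htenseF2 : ∀ a b, S2 a b ↔ S1 b a)
    (htenseG1 : ∀ a b, T2 a b ↔ T1 b a) (htenseG2 : ∀ a b, U2 a b ↔ U1 b a)
    (f : X1 → Y1) (g : X2 → Y2)
    (hfsurj : Function.Surjective f) (hgsurj : Function.Surjective g)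
    (hf1forth : ∀ a b, R1 a b → T1 (f a) (f b))
    (hf1back : ∀ a d, T1 (f a) d → ∃ b, R1 a b ∧ f b = d)
    (hf2forth : ∀ a b, R2 a b → T2 (f a) (f b))
    (hf2back : ∀ a d, T2 (f a) d → ∃ b, R2 a b ∧ f b = d)
    (hg1forth : ∀ a b, S1 a b → U1 (g a) (g b))
    (hg1back : ∀ a d, U1 (g a) d → ∃ b, S1 a b ∧ g b = d)
    (hg2forth : ∀ a b, S2 a b → U2 (g a) (g b))
    (hg2back : ∀ a d, U2 (g a) d → ∃ b, S2 a b ∧ g b = d) :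
    Function.Surjective (Sum.map f g) ∧
    (∀ a b, tenseSumRel1 R1 S1 a b →
      tenseSumRel1 T1 U1 (Sum.map f g a) (Sum.map f g b)) ∧
    (∀ a d, tenseSumRel1 T1 U1 (Sum.map f g a) d →
      ∃ b, tenseSumRel1 R1 S1 a b ∧ Sum.map f g b = d) ∧
    (∀ a b, tenseSumRel2 R2 S2 a b →
      tenseSumRel2 T2 U2 (Sum.map f g a) (Sum.map f g b)) ∧
    (∀ a d, tenseSumRel2 T2 U2 (Sum.map f g a) d →
      ∃ b, tenseSumRel2 R2 S2 a b ∧ Sum.map f g b = d) := by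
  refine ⟨?_, ?_, ?_, ?_, ?_⟩
  · rintro (y | y)
    · obtain ⟨x, hx⟩ := hfsurj y; exact ⟨Sum.inl x, by simp [hx]⟩
    · obtain ⟨x, hx⟩ := hgsurj y; exact ⟨Sum.inr x, by simp [hx]⟩
  · rintro (a | a) (b | b) h
    · exact hf1forth a b h
    · trivial
    · exact h.elim
    · exact hg1forth a b h
  · rintro (a | a) (d | d) h
    · obtain ⟨b, hb, hfb⟩ := hf1back a d h
      exact ⟨Sum.inl b, hb, by simp [hfb]⟩
    · obtain ⟨x, hx⟩ := hgsurj d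
      exact ⟨Sum.inr x, trivial, by simp [hx]⟩
    · exact h.elim
    · obtain ⟨b, hb, hgb⟩ := hg1back a d h
      exact ⟨Sum.inr b, hb, by simp [hgb]⟩
  · rintro (a | a) (b | b) h
    · exact hf2forth a b h
    · exact h.elim
    · trivial
    · exact hg2forth a b h
  · rintro (a | a) (d | d) h
    · obtain ⟨b, hb, hfb⟩ := hf2back a d h
      exact ⟨Sum.inl b, hb, by simp [hfb]⟩
    · exact h.elim
    · obtain ⟨x, hx⟩ := hfsurj d
      exact ⟨Sum.inl x, trivial, by simp [hx]⟩
    · obtain ⟨b, hb, hgb⟩ := hg2back a d h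
      exact ⟨Sum.inr b, hb, by simp [hgb]⟩
end

section
/- The map f from the product frame T × T, where T = (ω+1, R) is the unimodal tack (a R b iff a < ω or b = ω), onto the bimodal tack frame T₁₂(m) = (m×m) ⊕ ∘ — sending (a,b) with a,b < ω to (a mod m, b mod m) and all pairs with a = ω or b = ω to the top point — is a surjective p-morphism of bimodal frames. -/
/-- The relation of the unimodal tack frame on `ω + 1` (realized as `Option ℕ`, with
`none` as the top point `ω`): `a R b` iff `a < ω` or `b = ω`. -/
def tackR : Option ℕ → Option ℕ → Prop := fun a b => a ≠ none ∨ b = none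

/-- First relation of the bimodal tack `T₁₂(m) = (m × m) ⊕ ∘` (realized on
`Option (Fin m × Fin m)`, with `none` as the top point). -/
def tackS1 {m : ℕ} : Option (Fin m × Fin m) → Option (Fin m × Fin m) → Prop
  | some p, some q => p.2 = q.2
  | some _, none => True
  | none, none => True
  | none, some _ => False

/-- Second relation of the bimodal tack `T₁₂(m)`. -/
def tackS2 {m : ℕ} : Option (Fin m × Fin m) → Option (Fin m × Fin m) → Prop
  | some p, some q => p.1 = q.1
  | some _, none => True
  | none, none => True
  | none, some _ => False

/-- The map from `T × T` onto `T₁₂(m)`: pairs of non-top points go to their coordinates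
mod `m`, everything else goes to the top. -/
def tackMap (m : ℕ) (hm : 0 < m) : Option ℕ × Option ℕ → Option (Fin m × Fin m)
  | (some a, some b) => some (⟨a % m, Nat.mod_lt a hm⟩, ⟨b % m, Nat.mod_lt b hm⟩)
  | _ => none

/-- The map `tackMap` is a surjective p-morphism from the product of two unimodal tacks
onto the bimodal tack `T₁₂(m)`. -/
theorem tackMap_pmorphism (m : ℕ) (hm : 0 < m) :
    Function.Surjective (tackMap m hm) ∧
    (∀ p q : Option ℕ × Option ℕ, (tackR p.1 q.1 ∧ p.2 = q.2) →
      tackS1 (tackMap m hm p) (tackMap m hm q)) ∧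
    (∀ (p : Option ℕ × Option ℕ) (d : Option (Fin m × Fin m)),
      tackS1 (tackMap m hm p) d →
      ∃ q : Option ℕ × Option ℕ, (tackR p.1 q.1 ∧ p.2 = q.2) ∧ tackMap m hm q = d) ∧
    (∀ p q : Option ℕ × Option ℕ, (p.1 = q.1 ∧ tackR p.2 q.2) →
      tackS2 (tackMap m hm p) (tackMap m hm q)) ∧
    (∀ (p : Option ℕ × Option ℕ) (d : Option (Fin m × Fin m)),
      tackS2 (tackMap m hm p) d →
      ∃ q : Option ℕ × Option ℕ, (p.1 = q.1 ∧ tackR p.2 q.2) ∧ tackMap m hm q = d) := by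
  refine ⟨?_, ?_, ?_, ?_, ?_⟩
  · rintro (_ | ⟨i, j⟩)
    · exact ⟨(none, none), rfl⟩
    · exact ⟨(some i.1, some j.1), by
        simp [tackMap, Fin.ext_iff, Nat.mod_eq_of_lt i.2, Nat.mod_eq_of_lt j.2]⟩
  · rintro ⟨a, b⟩ ⟨c, b'⟩ ⟨h1, h2⟩
    simp only at h2; subst h2
    match a, b, c, h1 with
    | some a, some b, some c, _ => simp [tackMap, tackS1]
    | some a, some b, none, _ => simp [tackMap, tackS1]
    | some a, none, c, _ => cases c <;> simp [tackMap, tackS1]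
    | none, b, none, _ => cases b <;> simp [tackMap, tackS1]
    | none, b, some c, h1 => simp [tackR] at h1
  · rintro ⟨a, b⟩ d h
    match a, b, d, h with
    | some a, some b, some ⟨u, v⟩, h =>
      refine ⟨(some u.1, some b), ⟨Or.inl (by simp), rfl⟩, ?_⟩
      simp only [tackMap, tackS1] at h ⊢
      simp [Fin.ext_iff, Nat.mod_eq_of_lt u.2]; exact congrArg Fin.val h
    | some a, some b, none, _ =>
      exact ⟨(none, some b), ⟨Or.inr rfl, rfl⟩, rfl⟩
    | some a, none, d, h =>
      match d, h with
      | none, _ => exact ⟨(some a, none), ⟨Or.inl (by simp), rfl⟩, rfl⟩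
    | none, b, d, h =>
      match d, h with
      | none, _ => exact ⟨(none, b), ⟨Or.inr rfl, rfl⟩, by cases b <;> rfl⟩
  · rintro ⟨a, b⟩ ⟨a', c⟩ ⟨h1, h2⟩
    simp only at h1; subst h1
    match a, b, c, h2 with
    | some a, some b, some c, _ => simp [tackMap, tackS2]
    | some a, some b, none, _ => simp [tackMap, tackS2]
    | none, b, c, _ => cases c <;> simp [tackMap, tackS2]
    | some a, none, some c, h2 => simp [tackR] at h2
    | some a, none, none, _ => simp [tackMap, tackS2]
  · rintro ⟨a, b⟩ d h
    match a, b, d, h with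
    | some a, some b, some ⟨u, v⟩, h =>
      refine ⟨(some a, some v.1), ⟨rfl, Or.inl (by simp)⟩, ?_⟩
      simp only [tackMap, tackS2] at h ⊢
      simp [Fin.ext_iff, Nat.mod_eq_of_lt v.2]; exact congrArg Fin.val h
    | some a, some b, none, _ =>
      exact ⟨(some a, none), ⟨rfl, Or.inr rfl⟩, rfl⟩
    | none, b, d, h =>
      match d, h with
      | none, _ => exact ⟨(none, b), ⟨rfl, by cases b <;> simp [tackR]⟩, by cases b <;> rfl⟩
    | some a, none, d, h =>
      match d, h with
      | none, _ => exact ⟨(some a, none), ⟨rfl, Or.inr rfl⟩, rfl⟩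
end

section
/- If C ⊆ X is a cluster of a bimodal frame (X,R₁,R₂) with R₁, R₂ preorders, and there exist a₀ ∈ C and b₀ ∉ C with a₀ R₁ b₀, and moreover the restrictions of R₁, R₂ to C are equivalence relations with (R₁∘R₂)↾C universal on C and the frame satisfies the Church–Rosser property, then for every a ∈ C there exists b ∉ C with a R₁ b. -/
/-- If `C` is a cluster of a bimodal frame `(X, R₁, R₂)` (both relations preorders),
some `a₀ ∈ C` has an `R₁`-successor `b₀ ∉ C`, the restrictions of `R₁` and `R₂` to `C`
are equivalence relations (symmetric on `C`), `(R₁ ∘ R₂)` restricted to `C` is universal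
on `C`, and the frame satisfies the Church–Rosser property, then every `a ∈ C` has an
`R₁`-successor outside `C`. -/
theorem fruitfulness_propagates {X : Type*} (R1 R2 : X → X → Prop)
    (h1refl : Reflexive R1) (h1trans : Transitive R1)
    (h2refl : Reflexive R2) (h2trans : Transitive R2)
    (C : Set X)
    (hC : ∃ x : X, C = {y | Relation.ReflTransGen (fun a b => R1 a b ∨ R2 a b) x y ∧
                           Relation.ReflTransGen (fun a b => R1 a b ∨ R2 a b) y x})
    (hsym1 : ∀ a ∈ C, ∀ b ∈ C, R1 a b → R1 b a)
    (hsym2 : ∀ a ∈ C, ∀ b ∈ C, R2 a b → R2 b a)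
    (huniv : ∀ a ∈ C, ∀ c ∈ C, ∃ d ∈ C, R1 a d ∧ R2 d c)
    (hCR : ∀ x y z : X, R2 x y → R1 x z → ∃ u : X, R1 y u ∧ R2 z u)
    (a0 : X) (ha0 : a0 ∈ C) (b0 : X) (hb0 : b0 ∉ C) (hab : R1 a0 b0) :
    ∀ a ∈ C, ∃ b ∉ C, R1 a b := by
  intro a ha
  obtain ⟨d, hd, had, hda0⟩ := huniv a ha a0 ha0
  have ha0d : R2 a0 d := hsym2 d hd a0 ha0 hda0
  obtain ⟨u, hdu, hb0u⟩ := hCR a0 d b0 ha0d hab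
  refine ⟨u, ?_, h1trans had hdu⟩
  intro hu
  apply hb0
  obtain ⟨x, hx⟩ := hC
  have ha0' := ha0
  have hu' := hu
  rw [hx] at ha0' hu' ⊢
  refine ⟨ha0'.1.trans (Relation.ReflTransGen.single (Or.inl hab)), ?_⟩
  exact hu'.2.head (Or.inr hb0u)
end

section
/- If a general frame G with preorder relation validates Grz.3, then for every cluster C of G with C in the algebra of G, the algebra of G↾C has exactly two elements (∅ and C). -/
/-- `◇U` computed in a Kripke frame. -/
def mdia {X : Type*} (R : X → X → Prop) (P : Set X) : Set X :=
  {x | ∃ y, R x y ∧ y ∈ P}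

/-- `□U` computed in a Kripke frame. -/
def mbox {X : Type*} (R : X → X → Prop) (P : Set X) : Set X :=
  {x | ∀ y, R x y → y ∈ P}

/-- If a general frame `G = (X, R, A)` with `R` a preorder validates `Grz.3`
(the Grzegorczyk axiom `□(□(p → □p) → p) → p` and the linearity axiom
`◇p ∧ ◇q → ◇(p ∧ ◇q) ∨ ◇(q ∧ ◇p)` hold for all admissible valuations), then for every
cluster `C` of `G` with `C ∈ A`, the algebra of `G↾C` has exactly two elements:
`{U ∩ C : U ∈ A} = {∅, C}`. -/
theorem grz3_cluster_algebra_two_elements {X : Type*} (R : X → X → Prop)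
    (hrefl : Reflexive R) (htrans : Transitive R)
    (A : Set (Set X))
    (hcompl : ∀ U ∈ A, Uᶜ ∈ A)
    (hunion : ∀ U ∈ A, ∀ V ∈ A, U ∪ V ∈ A)
    (hdia : ∀ U ∈ A, mdia R U ∈ A)
    (hGrz : ∀ P ∈ A, mbox R ((mbox R (Pᶜ ∪ mbox R P))ᶜ ∪ P) ⊆ P)
    (hlin : ∀ P ∈ A, ∀ Q ∈ A,
      mdia R P ∩ mdia R Q ⊆ mdia R (P ∩ mdia R Q) ∪ mdia R (Q ∩ mdia R P))
    (C : Set X) (hCA : C ∈ A)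
    (hC : ∃ x : X, C = {y | R x y ∧ R y x}) :
    {V : Set X | ∃ U ∈ A, V = U ∩ C} = {∅, C} := by
  obtain ⟨x, hCx⟩ := hC
  subst hCx
  ext V
  simp only [Set.mem_setOf_eq, Set.mem_insert_iff, Set.mem_singleton_iff]
  constructor
  · rintro ⟨U, hU, rfl⟩
    set C : Set X := {y | R x y ∧ R y x} with hCdef
    by_cases h1 : U ∩ C = ∅
    · left; exact h1
    by_cases h2 : U ∩ C = C
    · right; exact h2
    exfalso
    obtain ⟨a, haU, haC⟩ := Set.nonempty_iff_ne_empty.2 h1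
    have hsub : ¬ C ⊆ U ∩ C := fun h => h2 (le_antisymm Set.inter_subset_right h)
    obtain ⟨b, hbC, hb⟩ := Set.not_subset.1 hsub
    have hbU : b ∉ U := fun h => hb ⟨h, hbC⟩
    have hDA : C ∪ mdia R C ∈ A := hunion C hCA _ (hdia C hCA)
    set D : Set X := C ∪ mdia R C with hDdef
    set P : Set X := (U ∩ C) ∪ Dᶜ with hPdef
    have hUCA : U ∩ C ∈ A := by
      have h := hcompl _ (hunion _ (hcompl U hU) _ (hcompl C hCA))
      rwa [Set.compl_union, compl_compl, compl_compl] at h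
    have hPA : P ∈ A := hunion _ hUCA _ (hcompl D hDA)
    have hbP : b ∉ P := by
      intro hbp
      rcases hbp with h | h
      · exact hbU h.1
      · exact h (Or.inl hbC)
    have hanotbox : a ∉ mbox R P := by
      intro h
      have hab : R a b := htrans haC.2 hbC.1
      exact hbP (h b hab)
    have key : b ∈ mbox R ((mbox R (Pᶜ ∪ mbox R P))ᶜ ∪ P) := by
      intro y hy
      by_cases hyP : y ∈ P
      · exact Or.inr hyP
      · left
        intro hybox
        have hyD : y ∈ D := by
          by_contra hyD
          exact hyP (Or.inr hyD)
        have hya : R y a := by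
          rcases hyD with h | ⟨c', hyc', hc'⟩
          · exact htrans h.2 haC.1
          · exact htrans hyc' (htrans hc'.2 haC.1)
        have := hybox a hya
        rcases this with h | h
        · exact h (Or.inl ⟨haU, haC⟩)
        · exact hanotbox h
    exact hbP (hGrz P hPA key)
  · rintro (rfl | rfl)
    · refine ⟨({y | R x y ∧ R y x} ∪ {y | R x y ∧ R y x}ᶜ)ᶜ,
        hcompl _ (hunion _ hCA _ (hcompl _ hCA)), ?_⟩
      simp
    · exact ⟨_, hCA, (Set.inter_self _).symm⟩
end

section
/- The frame (2, ≤, ∇) (two-element chain with universal second relation) validates all commutator axioms of S4×S4 (both relations preorders, commutativity, Church–Rosser) but refutes the presymmetry formula presym₁ under the valuation θ(p) = {0}, θ(q) = {0,1}. -/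
/-- `◇∨U = ◇₁U ∪ ◇₂U`. -/
def mdiaOr {X : Type*} (R1 R2 : X → X → Prop) (P : Set X) : Set X :=
  mdia R1 P ∪ mdia R2 P

/-- `◇*U = U ∪ ◇∨U ∪ (◇∨)²U` (pretransitivity degree 2). -/
def mdiaStar {X : Type*} (R1 R2 : X → X → Prop) (P : Set X) : Set X :=
  P ∪ mdiaOr R1 R2 P ∪ mdiaOr R1 R2 (mdiaOr R1 R2 P)

/-- `□*U`, the dual of `◇*`. -/
def mboxStar {X : Type*} (R1 R2 : X → X → Prop) (P : Set X) : Set X :=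
  (mdiaStar R1 R2 Pᶜ)ᶜ

/-- The frame `(2, ≤, ∇)` validates all commutator axioms of `S4 × S4` (both relations
are preorders, they commute, and the Church–Rosser property holds), but refutes the
presymmetry formula `presym₁ = q → ◇*(q ∧ □*(p → □₁(q → ◇₁ p)))` under the valuation
`θ(p) = {0}`, `θ(q) = {0, 1}`. -/
theorem two_chain_universal_refutes_presym :
    ∀ R1 R2 : Fin 2 → Fin 2 → Prop,
      (∀ a b, R1 a b ↔ a ≤ b) → (∀ a b, R2 a b ↔ True) →
      Reflexive R1 ∧ Transitive R1 ∧ Reflexive R2 ∧ Transitive R2 ∧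
      Relation.Comp R1 R2 = Relation.Comp R2 R1 ∧
      (∀ x y z : Fin 2, R1 x y → R2 x z → ∃ u, R2 y u ∧ R1 z u) ∧
      ∀ P Q : Set (Fin 2), P = {0} → Q = Set.univ →
        ¬ (Q ⊆ mdiaStar R1 R2
            (Q ∩ mboxStar R1 R2 (Pᶜ ∪ mbox R1 (Qᶜ ∪ mdia R1 P)))) := by
  intro R1 R2 h1 h2
  refine ⟨fun a => (h1 a a).2 le_rfl, fun a b c hab hbc => (h1 a c).2 (le_trans ((h1 a b).1 hab) ((h1 b c).1 hbc)), fun a => (h2 a a).2 trivial, fun a b c _ _ => (h2 a c).2 trivial, ?_, fun x y z _ _ => ⟨1, (h2 y 1).2 trivial, (h1 z 1).2 (by omega)⟩, ?_⟩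
  · ext a b
    constructor
    · rintro ⟨c, _, _⟩; exact ⟨0, (h2 a 0).2 trivial, (h1 0 b).2 (by omega)⟩
    · rintro ⟨c, _, _⟩; exact ⟨1, (h1 a 1).2 (by omega), (h2 1 b).2 trivial⟩
  · intro P Q hP hQ hsub
    subst hP hQ
    -- Key: the inner set Pᶜ ∪ mbox R1 (Qᶜ ∪ mdia R1 P) fails at 0 and at 1? analyze
    -- presym fails at world 0.
    have key : ∀ x : Fin 2, x ∉ ({0}ᶜ ∪ mbox R1 ((Set.univ : Set (Fin 2))ᶜ ∪ mdia R1 {0}) : Set (Fin 2)) ∨ True := fun _ => Or.inr trivial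
    have h0 : (0 : Fin 2) ∈ mdiaStar R1 R2
        (Set.univ ∩ mboxStar R1 R2 (({0} : Set (Fin 2))ᶜ ∪ mbox R1 ((Set.univ : Set (Fin 2))ᶜ ∪ mdia R1 {0}))) :=
      hsub (Set.mem_univ 0)
    -- The inner formula φ := p → □₁(q → ◇₁p) is false at 0 (since 0∈P, but R1 0 1 and 1∉Q→... 1∉◇₁P)
    have hφ0 : (0 : Fin 2) ∈ (({0} : Set (Fin 2))ᶜ ∪ mbox R1 ((Set.univ : Set (Fin 2))ᶜ ∪ mdia R1 {0}))ᶜ := by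
      intro h
      rcases h with h | h
      · exact h rfl
      · have := h 1 ((h1 0 1).2 (by omega))
        rcases this with h | ⟨y, hy, hy0⟩
        · exact h trivial
        · have : y = 0 := hy0
          subst this
          have : (1 : Fin 2) ≤ 0 := (h1 1 0).1 hy
          omega
    -- hence every world can reach 0 (via R2), so □* of inner set fails everywhere
    have hbox : ∀ x : Fin 2, x ∉ mboxStar R1 R2 (({0} : Set (Fin 2))ᶜ ∪ mbox R1 ((Set.univ : Set (Fin 2))ᶜ ∪ mdia R1 {0})) := by
      intro x hx
      apply hx
      left; right; right
      exact ⟨0, (h2 x 0).2 trivial, hφ0⟩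
    -- so the argument of mdiaStar is empty, contradicting h0
    have hempty : (Set.univ ∩ mboxStar R1 R2 (({0} : Set (Fin 2))ᶜ ∪ mbox R1 ((Set.univ : Set (Fin 2))ᶜ ∪ mdia R1 {0}))) = ∅ := by
      ext x; simp only [Set.mem_inter_iff, Set.mem_univ, true_and, Set.mem_empty_iff_false, iff_false]; exact hbox x
    rw [hempty] at h0
    rcases h0 with (h | h) | h
    · exact h
    · rcases h with ⟨y, _, hy⟩ | ⟨y, _, hy⟩ <;> exact hy
    · rcases h with ⟨y, _, hy⟩ | ⟨y, _, hy⟩ <;> (rcases hy with ⟨z, _, hz⟩ | ⟨z, _, hz⟩ <;> exact hz)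
end
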